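/- (Worked example, K = 7 and m = 2, instance of Lemma 2.) Under the mth-order Markov model with K = 7 and m = 2, the response indicator R₄ is conditionally independent of O₇ given (Y₂, Y₃, Y₄, O₅, O₆). -/

import Mathlib

open scoped Classical BigOperators

namespace MRM

/-- Observed datum at index `j`: `some (y j)` if `r j = true` (observed), otherwise `none`
(missing, i.e. the value `?`). -/
def obs {K : ℕ} (y r : Fin K → Bool) (j : Fin K) : Option Bool :=
  if r j then some (y j) else none

/-- Probability of an event under the joint pmf `p` on outcomes and response indicators. -/
noncomputable def Pr {K : ℕ} (p : (Fin K → Bool) → (Fin K → Bool) → ℝ)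
    (E : (Fin K → Bool) → (Fin K → Bool) → Prop) : ℝ :=
  ∑ y : Fin K → Bool, ∑ r : Fin K → Bool, if E y r then p y r else 0

/-- Conditional probability `P(A | C)` under `p`. -/
noncomputable def cPr {K : ℕ} (p : (Fin K → Bool) → (Fin K → Bool) → ℝ)
    (A C : (Fin K → Bool) → (Fin K → Bool) → Prop) : ℝ :=
  Pr p (fun y r => A y r ∧ C y r) / Pr p C

/-- Event: the outcomes at the 1-based positions `lo ≤ pos ≤ hi` take the values `yv pos`.
(If `hi < lo`, or the window is out of range, this is the trivial event, matching the
convention that a vector whose lower index exceeds its upper index is the null vector.) -/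
def Yeq {K : ℕ} (lo hi : ℕ) (yv : ℕ → Bool) :
    (Fin K → Bool) → (Fin K → Bool) → Prop :=
  fun y _ => ∀ j : Fin K, lo ≤ j.1 + 1 → j.1 + 1 ≤ hi → y j = yv (j.1 + 1)

/-- Event: the response indicators at positions `lo ≤ pos ≤ hi` take the values `rv pos`. -/
def Req {K : ℕ} (lo hi : ℕ) (rv : ℕ → Bool) :
    (Fin K → Bool) → (Fin K → Bool) → Prop :=
  fun _ r => ∀ j : Fin K, lo ≤ j.1 + 1 → j.1 + 1 ≤ hi → r j = rv (j.1 + 1)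

/-- Event: the observed data at positions `lo ≤ pos ≤ hi` take the values `ov pos`. -/
def Oeq {K : ℕ} (lo hi : ℕ) (ov : ℕ → Option Bool) :
    (Fin K → Bool) → (Fin K → Bool) → Prop :=
  fun y r => ∀ j : Fin K, lo ≤ j.1 + 1 → j.1 + 1 ≤ hi → obs y r j = ov (j.1 + 1)

/-- The `m`-th order Markov model:
`p(y, r) = ∏ₖ aₖ(yₖ | ȳᵐₖ) · bₖ(rₖ | ȳᵐₖ, yₖ, o̲ᵐₖ)`, where `aₖ` and `bₖ` are strictly
positive conditional pmfs in their first argument, `aₖ` depends only on the outcomes at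
1-based positions `max(1, k − m), …, k`, and `bₖ` depends only on `rₖ`, the outcomes at
positions `max(1, k − m), …, k` and the observed data at positions `k + 1, …, min(k + m, K)`.
Indices of `Fin K` are 0-based, so the 1-based paper position of `k : Fin K` is `k.1 + 1`. -/
structure Markov (K m : ℕ) where
  p : (Fin K → Bool) → (Fin K → Bool) → ℝ
  a : Fin K → (Fin K → Bool) → ℝ
  b : Fin K → (Fin K → Bool) → (Fin K → Bool) → ℝ
  a_pos : ∀ k y, 0 < a k y
  b_pos : ∀ k y r, 0 < b k y r
  a_pmf : ∀ (k : Fin K) (y : Fin K → Bool), ∑ v : Bool, a k (Function.update y k v) = 1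
  b_pmf : ∀ (k : Fin K) (y r : Fin K → Bool), ∑ v : Bool, b k y (Function.update r k v) = 1
  a_local : ∀ (k : Fin K) (y y' : Fin K → Bool),
    (∀ j : Fin K, k.1 + 1 - m ≤ j.1 + 1 → j.1 ≤ k.1 → y j = y' j) → a k y = a k y'
  b_local : ∀ (k : Fin K) (y r y' r' : Fin K → Bool), r k = r' k →
    (∀ j : Fin K, k.1 + 1 - m ≤ j.1 + 1 → j.1 ≤ k.1 → y j = y' j) →
    (∀ j : Fin K, k.1 < j.1 → j.1 + 1 ≤ k.1 + 1 + m → obs y r j = obs y' r' j) →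
    b k y r = b k y' r'
  factor : ∀ y r, p y r = ∏ k : Fin K, a k y * b k y r
  sum_one : ∑ y : Fin K → Bool, ∑ r : Fin K → Bool, p y r = 1

/-- Real value of a binary outcome. -/
def yVal (v : Bool) : ℝ := if v then 1 else 0

/-- `cₖ(ȳᵐₖ, o̲ᵐₖ; α) = E[exp(α Yₖ) | Rₖ = 1, Ȳᵐₖ = ȳᵐₖ, O̲ᵐₖ = o̲ᵐₖ]` (`k` is 1-based). -/
noncomputable def cfun {K : ℕ} (p : (Fin K → Bool) → (Fin K → Bool) → ℝ) (m : ℕ) (α : ℝ)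
    (k : ℕ) (yv : ℕ → Bool) (ov : ℕ → Option Bool) : ℝ :=
  ∑ v : Bool, Real.exp (α * yVal v) *
    cPr p (Yeq k k (fun _ => v))
      (fun y r => Req k k (fun _ => true) y r ∧ Yeq (k - m) (k - 1) yv y r ∧
        Oeq (k + 1) (k + m) ov y r)

/-- The exponential tilting restriction with sensitivity parameters `α k` (`k` is 1-based):
`f(Yₖ | Rₖ = 0, Ȳᵐₖ, O̲ᵐₖ) = f(Yₖ | Rₖ = 1, Ȳᵐₖ, O̲ᵐₖ) · exp(αₖ Yₖ) / cₖ(Ȳᵐₖ, O̲ᵐₖ; αₖ)`. -/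
def Tilt {K : ℕ} (p : (Fin K → Bool) → (Fin K → Bool) → ℝ) (m : ℕ) (α : ℕ → ℝ) : Prop :=
  ∀ (k : ℕ), 1 ≤ k → k ≤ K → ∀ (yv : ℕ → Bool) (ov : ℕ → Option Bool),
    cPr p (Yeq k k yv)
      (fun y r => Req k k (fun _ => false) y r ∧ Yeq (k - m) (k - 1) yv y r ∧
        Oeq (k + 1) (k + m) ov y r)
    = cPr p (Yeq k k yv)
        (fun y r => Req k k (fun _ => true) y r ∧ Yeq (k - m) (k - 1) yv y r ∧
          Oeq (k + 1) (k + m) ov y r)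
      * Real.exp (α k * yVal (yv k)) / cfun p m (α k) k yv ov

section Aux

/-- Mix two configurations: indices `≤ 3` from the first, indices `≥ 4` from the second. -/
def mix (f g : Fin 7 → Bool) : Fin 7 → Bool := fun j => if j.1 ≤ 3 then f j else g j

lemma mix_low (f g : Fin 7 → Bool) {j : Fin 7} (h : j.1 ≤ 3) : mix f g j = f j := if_pos h

lemma mix_high (f g : Fin 7 → Bool) {j : Fin 7} (h : ¬ j.1 ≤ 3) : mix f g j = g j := if_neg h

lemma mix_mix (f g : Fin 7 → Bool) : mix (mix f g) (mix g f) = f := by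
  funext j; by_cases h : j.1 ≤ 3 <;> simp [mix, h]

lemma obs_mix_low (y r y' r' : Fin 7 → Bool) {j : Fin 7} (h : j.1 ≤ 3) :
    obs (mix y y') (mix r r') j = obs y r j := by
  simp only [obs, mix_low _ _ h]

lemma obs_mix_high (y r y' r' : Fin 7 → Bool) {j : Fin 7} (h : ¬ j.1 ≤ 3) :
    obs (mix y y') (mix r r') j = obs y' r' j := by
  simp only [obs, mix_high _ _ h]

lemma Req_mix (rv : ℕ → Bool) (y y' r r' : Fin 7 → Bool) :
    Req 4 4 rv (mix y y') (mix r r') ↔ Req 4 4 rv y r := by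
  simp only [Req]
  constructor <;> intro h j h1 h2
  · have := h j h1 h2; rwa [mix_low _ _ (by omega)] at this
  · rw [mix_low _ _ (by omega)]; exact h j h1 h2

lemma Yeq_mix (yv : ℕ → Bool) (y y' r r' : Fin 7 → Bool) :
    Yeq 2 4 yv (mix y y') (mix r r') ↔ Yeq 2 4 yv y r := by
  simp only [Yeq]
  constructor <;> intro h j h1 h2
  · have := h j h1 h2; rwa [mix_low _ _ (by omega)] at this
  · rw [mix_low _ _ (by omega)]; exact h j h1 h2

lemma Oeq56_mix (ov : ℕ → Option Bool) (y y' r r' : Fin 7 → Bool) :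
    Oeq 5 6 ov (mix y y') (mix r r') ↔ Oeq 5 6 ov y' r' := by
  simp only [Oeq]
  constructor <;> intro h j h1 h2
  · have := h j h1 h2; rwa [obs_mix_high _ _ _ _ (by omega)] at this
  · rw [obs_mix_high _ _ _ _ (by omega)]; exact h j h1 h2

lemma Oeq77_mix (ov : ℕ → Option Bool) (y y' r r' : Fin 7 → Bool) :
    Oeq 7 7 ov (mix y y') (mix r r') ↔ Oeq 7 7 ov y' r' := by
  simp only [Oeq]
  constructor <;> intro h j h1 h2
  · have := h j h1 h2; rwa [obs_mix_high _ _ _ _ (by omega)] at this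
  · rw [obs_mix_high _ _ _ _ (by omega)]; exact h j h1 h2

lemma a_mix_low (M : Markov 7 2) (k : Fin 7) (hk : k.1 ≤ 3) (y y' : Fin 7 → Bool) :
    M.a k (mix y y') = M.a k y :=
  M.a_local k _ _ (fun j _ h2 => mix_low _ _ (by omega))

lemma a_mix_high (M : Markov 7 2) (k : Fin 7) (hk : 4 ≤ k.1)
    (yv : ℕ → Bool) (y y' r r' : Fin 7 → Bool)
    (hY : Yeq 2 4 yv y r) (hY' : Yeq 2 4 yv y' r') :
    M.a k (mix y y') = M.a k y' := by
  apply M.a_local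
  intro j h1 h2
  by_cases hj : j.1 ≤ 3
  · have hj2 : 2 ≤ j.1 := by omega
    rw [mix_low _ _ hj, hY j (by omega) (by omega), ← hY' j (by omega) (by omega)]
  · exact mix_high _ _ hj

lemma b_mix_low (M : Markov 7 2) (k : Fin 7) (hk : k.1 ≤ 3)
    (ovC : ℕ → Option Bool) (y y' r r' : Fin 7 → Bool)
    (hO : Oeq 5 6 ovC y r) (hO' : Oeq 5 6 ovC y' r') :
    M.b k (mix y y') (mix r r') = M.b k y r := by
  apply M.b_local
  · exact mix_low _ _ (by omega)
  · intro j _ h2; exact mix_low _ _ (by omega)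
  · intro j h1 h2
    by_cases hj : j.1 ≤ 3
    · exact obs_mix_low _ _ _ _ hj
    · have h4 : 4 ≤ j.1 := by omega
      have h5 : j.1 ≤ 5 := by omega
      rw [obs_mix_high _ _ _ _ hj, hO' j (by omega) (by omega),
        ← hO j (by omega) (by omega)]

lemma b_mix_high (M : Markov 7 2) (k : Fin 7) (hk : 4 ≤ k.1)
    (yv : ℕ → Bool) (y y' r r' : Fin 7 → Bool)
    (hY : Yeq 2 4 yv y r) (hY' : Yeq 2 4 yv y' r') :
    M.b k (mix y y') (mix r r') = M.b k y' r' := by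
  apply M.b_local
  · exact mix_high _ _ (by omega)
  · intro j h1 h2
    by_cases hj : j.1 ≤ 3
    · have hj2 : 2 ≤ j.1 := by omega
      rw [mix_low _ _ hj, hY j (by omega) (by omega), ← hY' j (by omega) (by omega)]
    · exact mix_high _ _ hj
  · intro j h1 _; exact obs_mix_high _ _ _ _ (by omega)

lemma p_swap (M : Markov 7 2) (yv : ℕ → Bool) (ovC : ℕ → Option Bool)
    (y y' r r' : Fin 7 → Bool)
    (hY : Yeq 2 4 yv y r) (hO : Oeq 5 6 ovC y r)
    (hY' : Yeq 2 4 yv y' r') (hO' : Oeq 5 6 ovC y' r') :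
    M.p (mix y y') (mix r r') * M.p (mix y' y) (mix r' r) = M.p y r * M.p y' r' := by
  rw [M.factor, M.factor, M.factor, M.factor, ← Finset.prod_mul_distrib,
    ← Finset.prod_mul_distrib]
  refine Finset.prod_congr rfl fun k _ => ?_
  by_cases hk : k.1 ≤ 3
  · rw [a_mix_low M k hk y y', a_mix_low M k hk y' y,
      b_mix_low M k hk ovC y y' r r' hO hO', b_mix_low M k hk ovC y' y r' r hO' hO]
  · have hk' : 4 ≤ k.1 := by omega
    rw [a_mix_high M k hk' yv y y' r r' hY hY', a_mix_high M k hk' yv y' y r' r hY' hY,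
      b_mix_high M k hk' yv y y' r r' hY hY', b_mix_high M k hk' yv y' y r' r hY' hY]
    ring

lemma ite_mul_ite_eq_zero (P Q : Prop) [Decidable P] [Decidable Q] (x z : ℝ) (h : ¬(P ∧ Q)) :
    (if P then x else 0) * (if Q then z else 0) = 0 := by
  by_cases hP : P
  · have hQ : ¬ Q := fun hQ => h ⟨hP, hQ⟩
    simp [hQ]
  · simp [hP]


/-- Indicator-weighted mass as a function on pairs. -/
noncomputable def ind (p : (Fin 7 → Bool) → (Fin 7 → Bool) → ℝ)
    (E : (Fin 7 → Bool) → (Fin 7 → Bool) → Prop)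
    (w : (Fin 7 → Bool) × (Fin 7 → Bool)) : ℝ :=
  if E w.1 w.2 then p w.1 w.2 else 0

end Aux

/-- Worked example, `K = 7`, `m = 2`, instance of Lemma 2.  Under the
`m`th-order Markov model with `K = 7` and `m = 2`, the response indicator `R₄` is
conditionally independent of `O₇` given `(Y₂, Y₃, Y₄, O₅, O₆)`. -/
theorem statement19 (M : Markov 7 2)
    (rv : ℕ → Bool) (ovB : ℕ → Option Bool) (yv : ℕ → Bool) (ovC : ℕ → Option Bool)
    (hC : 0 < Pr M.p (fun y r => Yeq 2 4 yv y r ∧ Oeq 5 6 ovC y r)) :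
    cPr M.p (fun y r => Req 4 4 rv y r ∧ Oeq 7 7 ovB y r)
        (fun y r => Yeq 2 4 yv y r ∧ Oeq 5 6 ovC y r)
      = cPr M.p (Req 4 4 rv) (fun y r => Yeq 2 4 yv y r ∧ Oeq 5 6 ovC y r)
        * cPr M.p (Oeq 7 7 ovB) (fun y r => Yeq 2 4 yv y r ∧ Oeq 5 6 ovC y r) := by
  classical
  have hPr : ∀ E : (Fin 7 → Bool) → (Fin 7 → Bool) → Prop,
      Pr M.p E = ∑ w : (Fin 7 → Bool) × (Fin 7 → Bool), ind M.p E w := by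
    intro E; rw [Pr]
    exact (Fintype.sum_prod_type (fun w : (Fin 7 → Bool) × (Fin 7 → Bool) =>
      if E w.1 w.2 then M.p w.1 w.2 else 0)).symm
  have expand : ∀ E1 E2 : (Fin 7 → Bool) → (Fin 7 → Bool) → Prop,
      Pr M.p E1 * Pr M.p E2
        = ∑ z : ((Fin 7 → Bool) × (Fin 7 → Bool)) × ((Fin 7 → Bool) × (Fin 7 → Bool)),
            ind M.p E1 z.1 * ind M.p E2 z.2 := by
    intro E1 E2
    rw [hPr, hPr, Finset.sum_mul_sum]
    exact (Fintype.sum_prod_type (fun z :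
      ((Fin 7 → Bool) × (Fin 7 → Bool)) × ((Fin 7 → Bool) × (Fin 7 → Bool)) =>
      ind M.p E1 z.1 * ind M.p E2 z.2)).symm
  have main : ∀ y r y' r' : Fin 7 → Bool,
      ind M.p (fun y r => (Req 4 4 rv y r ∧ Oeq 7 7 ovB y r) ∧
          (Yeq 2 4 yv y r ∧ Oeq 5 6 ovC y r)) (mix y y', mix r r') *
      ind M.p (fun y r => Yeq 2 4 yv y r ∧ Oeq 5 6 ovC y r) (mix y' y, mix r' r)
      = ind M.p (fun y r => Req 4 4 rv y r ∧ (Yeq 2 4 yv y r ∧ Oeq 5 6 ovC y r)) (y, r) *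
        ind M.p (fun y r => Oeq 7 7 ovB y r ∧ (Yeq 2 4 yv y r ∧ Oeq 5 6 ovC y r)) (y', r') := by
    intro y r y' r'
    have hiff : (((Req 4 4 rv (mix y y') (mix r r') ∧ Oeq 7 7 ovB (mix y y') (mix r r')) ∧
          (Yeq 2 4 yv (mix y y') (mix r r') ∧ Oeq 5 6 ovC (mix y y') (mix r r'))) ∧
        (Yeq 2 4 yv (mix y' y) (mix r' r) ∧ Oeq 5 6 ovC (mix y' y) (mix r' r)))
        ↔ ((Req 4 4 rv y r ∧ (Yeq 2 4 yv y r ∧ Oeq 5 6 ovC y r)) ∧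
          (Oeq 7 7 ovB y' r' ∧ (Yeq 2 4 yv y' r' ∧ Oeq 5 6 ovC y' r'))) := by
      simp only [Req_mix, Oeq77_mix, Yeq_mix, Oeq56_mix]; tauto
    simp only [ind]
    by_cases hc : (Req 4 4 rv y r ∧ (Yeq 2 4 yv y r ∧ Oeq 5 6 ovC y r)) ∧
        (Oeq 7 7 ovB y' r' ∧ (Yeq 2 4 yv y' r' ∧ Oeq 5 6 ovC y' r'))
    · have h1 := hiff.mpr hc
      rw [if_pos h1.1, if_pos h1.2, if_pos hc.1, if_pos hc.2]
      exact p_swap M yv ovC y y' r r' hc.1.2.1 hc.1.2.2 hc.2.2.1 hc.2.2.2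
    · exact (ite_mul_ite_eq_zero _ _ _ _ (fun h => hc (hiff.mp h))).trans
        (ite_mul_ite_eq_zero _ _ _ _ hc).symm
  have hinv : Function.Involutive
      (fun z : ((Fin 7 → Bool) × (Fin 7 → Bool)) × ((Fin 7 → Bool) × (Fin 7 → Bool)) =>
        ((mix z.1.1 z.2.1, mix z.1.2 z.2.2), (mix z.2.1 z.1.1, mix z.2.2 z.1.2))) := by
    intro z
    exact Prod.ext (Prod.ext (mix_mix _ _) (mix_mix _ _))
      (Prod.ext (mix_mix _ _) (mix_mix _ _))
  have key : Pr M.p (fun y r => (Req 4 4 rv y r ∧ Oeq 7 7 ovB y r) ∧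
        (Yeq 2 4 yv y r ∧ Oeq 5 6 ovC y r)) *
      Pr M.p (fun y r => Yeq 2 4 yv y r ∧ Oeq 5 6 ovC y r)
      = Pr M.p (fun y r => Req 4 4 rv y r ∧ (Yeq 2 4 yv y r ∧ Oeq 5 6 ovC y r)) *
        Pr M.p (fun y r => Oeq 7 7 ovB y r ∧ (Yeq 2 4 yv y r ∧ Oeq 5 6 ovC y r)) := by
    rw [expand, expand]
    refine (Fintype.sum_bijective _ hinv.bijective _ _ ?_).symm
    intro z
    exact (main z.1.1 z.1.2 z.2.1 z.2.2).symm
  have hc' : Pr M.p (fun y r => Yeq 2 4 yv y r ∧ Oeq 5 6 ovC y r) ≠ 0 := ne_of_gt hC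
  simp only [cPr]
  field_simp
  linear_combination key

end MRM
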